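/- (Theorem 1.) Under the MIS/RMIS tableau setup, assume: (i) the inner table is third order and row-sum consistent, i.e. (b^I)^⊺𝟙 = 1, (b^I)^⊺c^I = 1/2, (b^I)^⊺(c^I × c^I) = 1/3, (b^I)^⊺A^I c^I = 1/6, and A^I 𝟙 = c^I; (ii) the outer table is explicit (A^O strictly lower triangular), row-sum consistent (A^O 𝟙_{s^O} = c^O), and fourth order, i.e. (b^O)^⊺𝟙 = 1, (b^O)^⊺c^O = 1/2, (b^O)^⊺((c^O)^2) = 1/3, (b^O)^⊺A^O c^O = 1/6, (b^O)^⊺((c^O)^3) = 1/4, (b^O × c^O)^⊺ A^O c^O = 1/8, (b^O)^⊺A^O((c^O)^2) = 1/12, and (b^O)^⊺A^O A^O c^O = 1/24; (iii) (v^O)^⊺ A^O c^O = 1/12, where v^O ∈ ℝ^{s^O} is defined by v^O_1 = 0, v^O_i = b^O_i (c^O_i − c^O_{i−1}) + (c^O_{i+1} − c^O_{i−1}) Σ_{j=i+1}^{s^O} b^O_j for 1 < i < s^O, and v^O_{s^O} = b^O_{s^O}(c^O_{s^O} − c^O_{s^O−1}). Then all slow fourth-order GARK coupling conditions hold: (b^s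 × c^s)^⊺ A^{s,f} c^f = 1/8, (b^s)^⊺ A^{s,f} (c^f × c^f) = 1/12, (b^s)^⊺ A^{s,s} A^{s,f} c^f = 1/24, (b^s)^⊺ A^{s,f} A^{f,f} c^f = 1/24, and (b^s)^⊺ A^{s,f} A^{f,s} c^s = 1/24. -/
import Mathlib


open Matrix BigOperators Finset

/-- The increments `d_j = c^O_{j+1} - c^O_j` (with `d_{s^O} = 1 - c^O_{s^O}`). -/
noncomputable def misD (sO : ℕ) (cO : Fin sO → ℝ) (j : Fin sO) : ℝ :=
  if h : j.val + 1 < sO then cO ⟨j.val + 1, h⟩ - cO j else 1 - cO j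

/-- The fast-fast GARK coefficient matrix `A^{f,f}` of the MIS/RMIS tableau. -/
noncomputable def misAff (sI sO : ℕ) (AI : Matrix (Fin sI) (Fin sI) ℝ)
    (bI : Fin sI → ℝ) (cO : Fin sO → ℝ) :
    Matrix (Fin sO × Fin sI) (Fin sO × Fin sI) ℝ :=
  fun ip jq =>
    if jq.1 < ip.1 then misD sO cO jq.1 * bI jq.2
    else if jq.1 = ip.1 then misD sO cO ip.1 * AI ip.2 jq.2
    else 0

/-- The slow-fast GARK coefficient matrix `A^{s,f}` of the MIS/RMIS tableau. -/
noncomputable def misAsf (sI sO : ℕ) (bI : Fin sI → ℝ) (cO : Fin sO → ℝ) :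
    Matrix (Fin sO) (Fin sO × Fin sI) ℝ :=
  fun i jq => if jq.1 < i then misD sO cO jq.1 * bI jq.2 else 0

/-- The fast-slow GARK coefficient matrix `A^{f,s}` of the MIS/RMIS tableau. -/
noncomputable def misAfs (sI sO : ℕ) (cI : Fin sI → ℝ)
    (AO : Matrix (Fin sO) (Fin sO) ℝ) (bO : Fin sO → ℝ) :
    Matrix (Fin sO × Fin sI) (Fin sO) ℝ :=
  fun ip j =>
    if ip.1.val = 0 then
      (if h : 1 < sO then cI ip.2 * AO ⟨1, h⟩ j else 0)
    else if h : ip.1.val + 1 < sO then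
      AO ip.1 j + cI ip.2 * (AO ⟨ip.1.val + 1, h⟩ j - AO ip.1 j)
    else
      AO ip.1 j + cI ip.2 * (bO j - AO ip.1 j)

/-- The fast abscissae `c^f` of the MIS/RMIS tableau. -/
noncomputable def misCf (sI sO : ℕ) (cI : Fin sI → ℝ) (cO : Fin sO → ℝ) :
    Fin sO × Fin sI → ℝ :=
  fun ip => cO ip.1 + misD sO cO ip.1 * cI ip.2

/-- The RMIS fast weights `b^f` (i-th block is `b^O_i e_1`). -/
noncomputable def misBf (sI sO : ℕ) (bO : Fin sO → ℝ) : Fin sO × Fin sI → ℝ :=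
  fun ip => if ip.2.val = 0 then bO ip.1 else 0

/-- The vector `v^O` appearing in the fourth-order RMIS condition. -/
noncomputable def misV (sO : ℕ) (bO cO : Fin sO → ℝ) (i : Fin sO) : ℝ :=
  if i.val = 0 then 0
  else if h : i.val + 1 < sO then
    bO i * (cO i - cO ⟨i.val - 1, by have := i.isLt; omega⟩) +
      (cO ⟨i.val + 1, h⟩ - cO ⟨i.val - 1, by have := i.isLt; omega⟩) *
        ∑ j ∈ Finset.univ.filter (fun j => i < j), bO j
  else bO i * (cO i - cO ⟨i.val - 1, by have := i.isLt; omega⟩)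

noncomputable def cE (sO : ℕ) (cO : Fin sO → ℝ) (n : ℕ) : ℝ :=
  if h : n < sO then cO ⟨n, h⟩ else 1
noncomputable def dE (sO : ℕ) (cO : Fin sO → ℝ) (n : ℕ) : ℝ :=
  cE sO cO (n+1) - cE sO cO n
noncomputable def bE (sO : ℕ) (bO : Fin sO → ℝ) (n : ℕ) : ℝ :=
  if h : n < sO then bO ⟨n, h⟩ else 0

lemma misD_eq (sO : ℕ) (cO : Fin sO → ℝ) (j : Fin sO) :
    misD sO cO j = dE sO cO j.1 := by
  unfold misD dE cE
  rcases j with ⟨j, hj⟩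
  by_cases h : j + 1 < sO <;> simp [h, hj]

lemma sum_fin_ite_lt (n k : ℕ) (hk : k ≤ n) (f : ℕ → ℝ) :
    ∑ j : Fin n, (if (j : ℕ) < k then f j else 0) = ∑ m ∈ Finset.range k, f m := by
  rw [Fin.sum_univ_eq_sum_range (fun m => if m < k then f m else 0) n,
    ← Finset.sum_filter]
  congr 1
  ext m
  simp only [Finset.mem_filter, Finset.mem_range]
  omega

lemma sum_fin_ite_gt (n k : ℕ) (f : ℕ → ℝ) :
    ∑ j : Fin n, (if k < (j : ℕ) then f j else 0)
      = ∑ m ∈ Finset.range n, (if k + 1 ≤ m then f m else 0) := by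
  rw [Fin.sum_univ_eq_sum_range (fun m => if k < m then f m else 0) n]
  exact Finset.sum_congr rfl fun m _ => by
    split_ifs with h1 h2 h2 <;> first | rfl | omega

lemma teleA (sO : ℕ) (cO : Fin sO → ℝ) (k : ℕ) :
    ∑ m ∈ Finset.range k, dE sO cO m * (cE sO cO m + dE sO cO m / 2)
      = (cE sO cO k)^2/2 - (cE sO cO 0)^2/2 := by
  rw [← Finset.sum_range_sub (fun n => (cE sO cO n)^2/2) k]
  exact Finset.sum_congr rfl fun m _ => by unfold dE; ring

lemma teleB (sO : ℕ) (cO : Fin sO → ℝ) (k : ℕ) :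
    ∑ m ∈ Finset.range k, dE sO cO m * ((cE sO cO m)^2 + cE sO cO m * dE sO cO m + (dE sO cO m)^2/3)
      = (cE sO cO k)^3/3 - (cE sO cO 0)^3/3 := by
  rw [← Finset.sum_range_sub (fun n => (cE sO cO n)^3/3) k]
  exact Finset.sum_congr rfl fun m _ => by unfold dE; ring

lemma teleC (sO : ℕ) (cO : Fin sO → ℝ) (k : ℕ) :
    ∑ m ∈ Finset.range k, dE sO cO m * ((cE sO cO m)^2/2 + cE sO cO m * dE sO cO m / 2 + (dE sO cO m)^2/6)
      = (cE sO cO k)^3/6 - (cE sO cO 0)^3/6 := by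
  rw [← Finset.sum_range_sub (fun n => (cE sO cO n)^3/6) k]
  exact Finset.sum_congr rfl fun m _ => by unfold dE; ring

noncomputable def wE (sO : ℕ) (AO : Matrix (Fin sO) (Fin sO) ℝ) (bO cO : Fin sO → ℝ) (n : ℕ) : ℝ :=
  if h : n < sO then (AO *ᵥ cO) ⟨n, h⟩ else bO ⬝ᵥ cO

noncomputable def BE (sO : ℕ) (bO : Fin sO → ℝ) (m : ℕ) : ℝ :=
  ∑ i ∈ Finset.range sO, if m ≤ i then bE sO bO i else 0

lemma BE_top (sO : ℕ) (bO : Fin sO → ℝ) : BE sO bO sO = 0 := by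
  unfold BE
  refine Finset.sum_eq_zero fun i hi => ?_
  rw [if_neg]
  exact fun h => absurd (Finset.mem_range.mp hi) (by omega)

lemma BE_succ (sO : ℕ) (bO : Fin sO → ℝ) (m : ℕ) (hm : m < sO) :
    BE sO bO m = bE sO bO m + BE sO bO (m+1) := by
  unfold BE
  have e : ∀ i ∈ Finset.range sO, (if m ≤ i then bE sO bO i else 0)
      = (if i = m then bE sO bO i else 0) + (if m + 1 ≤ i then bE sO bO i else 0) := by
    intro i _
    by_cases h2 : i = m
    · subst h2; rw [if_pos (le_refl i), if_pos rfl, if_neg (by omega)]; ring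
    · by_cases h1 : m ≤ i
      · rw [if_pos h1, if_neg h2, if_pos (by omega)]; ring
      · rw [if_neg h1, if_neg h2, if_neg (by omega)]; ring
  rw [Finset.sum_congr rfl e, Finset.sum_add_distrib, Finset.sum_ite_eq' (Finset.range sO) m,
    if_pos (Finset.mem_range.mpr hm)]

lemma sum_range_ite_lt (N k : ℕ) (hk : k ≤ N) (f : ℕ → ℝ) :
    ∑ m ∈ Finset.range N, (if m < k then f m else 0) = ∑ m ∈ Finset.range k, f m := by
  rw [← Finset.sum_filter]
  congr 1
  ext m
  simp only [Finset.mem_filter, Finset.mem_range]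
  omega

noncomputable def gE (sO : ℕ) (AO : Matrix (Fin sO) (Fin sO) ℝ) (bO cO : Fin sO → ℝ) (m : ℕ) : ℝ :=
  dE sO cO m * ((wE sO AO bO cO m + wE sO AO bO cO (m+1))/2)

noncomputable def FE (sO : ℕ) (AO : Matrix (Fin sO) (Fin sO) ℝ) (bO cO : Fin sO → ℝ) (k : ℕ) : ℝ :=
  if k = 0 then 0 else (dE sO cO (k-1) * BE sO bO k) * wE sO AO bO cO k

noncomputable def vE (sO : ℕ) (bO cO : Fin sO → ℝ) (m : ℕ) : ℝ :=
  if h : m < sO then misV sO bO cO ⟨m, h⟩ else 0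

/-- Theorem 1: Under third-order inner, explicit fourth-order outer,
row-sum consistency and the RMIS condition `(v^O)ᵀ A^O c^O = 1/12`, all slow
fourth-order GARK coupling conditions hold. -/
theorem slow_fourth_order_conditions (sI sO : ℕ) (hsI : 1 ≤ sI) (hsO : 2 ≤ sO)
    (AI : Matrix (Fin sI) (Fin sI) ℝ) (bI cI : Fin sI → ℝ)
    (AO : Matrix (Fin sO) (Fin sO) ℝ) (bO cO : Fin sO → ℝ)
    (hcO1 : cO ⟨0, by omega⟩ = 0)
    -- inner table: third order and row-sum consistent
    (hbI1 : ∑ q, bI q = 1)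
    (hbI2 : ∑ q, bI q * cI q = 1 / 2)
    (hbI3 : ∑ q, bI q * (cI q * cI q) = 1 / 3)
    (hbI4 : ∑ q, bI q * (AI *ᵥ cI) q = 1 / 6)
    (hAIrow : ∀ p, ∑ q, AI p q = cI p)
    -- outer table: explicit, row-sum consistent and fourth order
    (hAOexp : ∀ i j : Fin sO, i ≤ j → AO i j = 0)
    (hAOrow : ∀ i, ∑ j, AO i j = cO i)
    (hbO1 : ∑ i, bO i = 1)
    (hbO2 : ∑ i, bO i * cO i = 1 / 2)
    (hbO3 : ∑ i, bO i * (cO i) ^ 2 = 1 / 3)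
    (hbO4 : bO ⬝ᵥ (AO *ᵥ cO) = 1 / 6)
    (hbO5 : ∑ i, bO i * (cO i) ^ 3 = 1 / 4)
    (hbO6 : (fun i => bO i * cO i) ⬝ᵥ (AO *ᵥ cO) = 1 / 8)
    (hbO7 : bO ⬝ᵥ (AO *ᵥ fun i => (cO i) ^ 2) = 1 / 12)
    (hbO8 : bO ⬝ᵥ (AO *ᵥ (AO *ᵥ cO)) = 1 / 24)
    -- the fourth-order RMIS condition
    (hv : misV sO bO cO ⬝ᵥ (AO *ᵥ cO) = 1 / 12) :
    ((fun i => bO i * cO i) ⬝ᵥ (misAsf sI sO bI cO *ᵥ misCf sI sO cI cO) = 1 / 8) ∧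
    (bO ⬝ᵥ (misAsf sI sO bI cO *ᵥ fun ip => (misCf sI sO cI cO ip) ^ 2) = 1 / 12) ∧
    (bO ⬝ᵥ (AO *ᵥ (misAsf sI sO bI cO *ᵥ misCf sI sO cI cO)) = 1 / 24) ∧
    (bO ⬝ᵥ (misAsf sI sO bI cO *ᵥ (misAff sI sO AI bI cO *ᵥ misCf sI sO cI cO)) = 1 / 24) ∧
    (bO ⬝ᵥ (misAsf sI sO bI cO *ᵥ (misAfs sI sO cI AO bO *ᵥ cO)) = 1 / 24) := by
  have h0sO : 0 < sO := by omega
  have hcE : ∀ (n : ℕ) (h : n < sO), cE sO cO n = cO ⟨n, h⟩ := fun n h => dif_pos h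
  have hcE0 : cE sO cO 0 = 0 := by rw [hcE 0 h0sO]; exact hcO1
  have hcEj : ∀ j : Fin sO, cE sO cO j.1 = cO j := by
    intro j; rw [hcE j.1 j.isLt]
  -- generic row formula for A^{s,f}
  have hAsf : ∀ (x : Fin sO × Fin sI → ℝ) (i : Fin sO),
      (misAsf sI sO bI cO *ᵥ x) i
        = ∑ j : Fin sO, (if (j:ℕ) < (i:ℕ) then misD sO cO j * ∑ q, bI q * x (j, q) else 0) := by
    intro x i
    simp only [Matrix.mulVec, dotProduct, misAsf, Fintype.sum_prod_type]
    refine Finset.sum_congr rfl fun j _ => ?_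
    by_cases h : j < i
    · rw [if_pos (show (j:ℕ) < (i:ℕ) from h), Finset.mul_sum]
      exact Finset.sum_congr rfl fun q _ => by rw [if_pos h]; ring
    · rw [if_neg (show ¬((j:ℕ) < (i:ℕ)) from h)]
      simp [h]
  -- inner first moment
  have hm1 : ∀ j : Fin sO, ∑ q, bI q * misCf sI sO cI cO (j, q)
      = cO j + misD sO cO j / 2 := by
    intro j
    have e : ∀ q, bI q * misCf sI sO cI cO (j, q)
        = cO j * bI q + misD sO cO j * (bI q * cI q) := fun q => by
      simp only [misCf]; ring
    simp_rw [e, Finset.sum_add_distrib, ← Finset.mul_sum, hbI1, hbI2]; ring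
  -- inner second moment
  have hm2 : ∀ j : Fin sO, ∑ q, bI q * (misCf sI sO cI cO (j, q))^2
      = (cO j)^2 + cO j * misD sO cO j + (misD sO cO j)^2 / 3 := by
    intro j
    have e : ∀ q, bI q * (misCf sI sO cI cO (j, q))^2
        = (cO j)^2 * bI q + (2 * cO j * misD sO cO j) * (bI q * cI q)
          + (misD sO cO j)^2 * (bI q * (cI q * cI q)) := fun q => by
      simp only [misCf]; ring
    simp_rw [e, Finset.sum_add_distrib, ← Finset.mul_sum, hbI1, hbI2, hbI3]; ring
  -- key row values
  have key1 : ∀ i : Fin sO, (misAsf sI sO bI cO *ᵥ misCf sI sO cI cO) i = (cO i)^2 / 2 := by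
    intro i
    rw [hAsf]
    have e : ∀ j : Fin sO, (if (j:ℕ) < (i:ℕ) then misD sO cO j * ∑ q, bI q * misCf sI sO cI cO (j, q) else 0)
        = (if (j:ℕ) < (i:ℕ) then dE sO cO j * (cE sO cO j + dE sO cO j / 2) else 0) := by
      intro j; rw [hm1 j, misD_eq, hcEj j]
    rw [Finset.sum_congr rfl (fun j _ => e j),
      sum_fin_ite_lt sO i.1 (le_of_lt i.isLt) (fun m => dE sO cO m * (cE sO cO m + dE sO cO m / 2)), teleA, hcE0, hcEj i]
    ring
  have key2 : ∀ i : Fin sO,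
      (misAsf sI sO bI cO *ᵥ fun ip => (misCf sI sO cI cO ip)^2) i = (cO i)^3 / 3 := by
    intro i
    rw [hAsf]
    have e : ∀ j : Fin sO, (if (j:ℕ) < (i:ℕ) then misD sO cO j * ∑ q, bI q * (misCf sI sO cI cO (j, q))^2 else 0)
        = (if (j:ℕ) < (i:ℕ) then dE sO cO j * ((cE sO cO j)^2 + cE sO cO j * dE sO cO j + (dE sO cO j)^2/3) else 0) := by
      intro j; rw [hm2 j, misD_eq, hcEj j]
    rw [Finset.sum_congr rfl (fun j _ => e j),
      sum_fin_ite_lt sO i.1 (le_of_lt i.isLt) (fun m => dE sO cO m * ((cE sO cO m)^2 + cE sO cO m * dE sO cO m + (dE sO cO m)^2/3)), teleB, hcE0, hcEj i]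
    ring
  refine ⟨?_, ?_, ?_, ?_, ?_⟩
  · -- condition 1
    simp only [dotProduct]
    simp_rw [key1]
    have e : ∀ i, bO i * cO i * ((cO i)^2/2) = (bO i * (cO i)^3)/2 := fun i => by ring
    simp_rw [e]
    rw [← Finset.sum_div, hbO5]; norm_num
  · -- condition 2
    simp only [dotProduct]
    simp_rw [key2]
    have e : ∀ i, bO i * ((cO i)^3/3) = (bO i * (cO i)^3)/3 := fun i => by ring
    simp_rw [e]
    rw [← Finset.sum_div, hbO5]; norm_num
  · -- condition 3
    have e : (misAsf sI sO bI cO *ᵥ misCf sI sO cI cO) = fun i => (cO i)^2/2 := funext key1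
    rw [e]
    have h7 := hbO7
    simp only [dotProduct, Matrix.mulVec] at h7 ⊢
    have e2 : ∀ i, (∑ j, AO i j * ((cO j)^2/2)) = (∑ j, AO i j * (cO j)^2)/2 := by
      intro i; rw [Finset.sum_div]; exact Finset.sum_congr rfl fun j _ => by ring
    have e3 : ∀ i, bO i * ((∑ j, AO i j * (cO j)^2)/2) = (bO i * ∑ j, AO i j * (cO j)^2)/2 :=
      fun i => by ring
    simp_rw [e2, e3]
    rw [← Finset.sum_div, h7]; norm_num
  · -- condition 4
    have hAi : ∀ (i : Fin sO) (p : Fin sI), ∑ q, AI p q * misCf sI sO cI cO (i, q)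
        = cO i * cI p + misD sO cO i * (AI *ᵥ cI) p := by
      intro i p
      have e : ∀ q, AI p q * misCf sI sO cI cO (i, q)
          = cO i * AI p q + misD sO cO i * (AI p q * cI q) := fun q => by
        simp only [misCf]; ring
      simp_rw [e, Finset.sum_add_distrib, ← Finset.mul_sum, hAIrow p]
      rw [show (AI *ᵥ cI) p = ∑ x, AI p x * cI x from rfl]
    have hAffrow : ∀ (i : Fin sO) (p : Fin sI),
        (misAff sI sO AI bI cO *ᵥ misCf sI sO cI cO) (i, p)
          = (cO i)^2/2 + misD sO cO i * cO i * cI p + (misD sO cO i)^2 * (AI *ᵥ cI) p := by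
      intro i p
      simp only [Matrix.mulVec, dotProduct, misAff, Fintype.sum_prod_type]
      have split : ∀ j : Fin sO,
          (∑ q, (if j < i then misD sO cO j * bI q
              else if j = i then misD sO cO i * AI p q else 0) * misCf sI sO cI cO (j, q))
            = (if (j:ℕ) < (i:ℕ) then misD sO cO j * ∑ q, bI q * misCf sI sO cI cO (j, q) else 0)
              + (if j = i then misD sO cO i * ∑ q, AI p q * misCf sI sO cI cO (j, q) else 0) := by
        intro j
        by_cases h1 : j < i
        · have h2 : j ≠ i := ne_of_lt h1
          rw [if_pos (show (j:ℕ) < (i:ℕ) from h1), if_neg h2, add_zero, Finset.mul_sum]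
          refine Finset.sum_congr rfl fun q _ => ?_
          rw [if_pos h1]; ring
        · by_cases h2 : j = i
          · rw [if_neg (show ¬((j:ℕ) < (i:ℕ)) from h1), if_pos h2, zero_add, Finset.mul_sum]
            refine Finset.sum_congr rfl fun q _ => ?_
            rw [if_neg h1, if_pos h2]; ring
          · rw [if_neg (show ¬((j:ℕ) < (i:ℕ)) from h1), if_neg h2, add_zero]
            refine Finset.sum_eq_zero fun q _ => ?_
            rw [if_neg h1, if_neg h2, zero_mul]
      rw [Finset.sum_congr rfl (fun j _ => split j), Finset.sum_add_distrib]
      have s1 : (∑ j : Fin sO, if (j:ℕ) < (i:ℕ) then misD sO cO j * ∑ q, bI q * misCf sI sO cI cO (j, q) else 0)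
          = (cO i)^2/2 := by
        rw [← hAsf (misCf sI sO cI cO) i, key1 i]
      rw [s1]
      simp only [Finset.sum_ite_eq', Finset.mem_univ, if_true]
      rw [hAi i p, show (AI *ᵥ cI) p = ∑ x, AI p x * cI x from rfl]; ring
    have hm3 : ∀ j : Fin sO, ∑ p, bI p * (misAff sI sO AI bI cO *ᵥ misCf sI sO cI cO) (j, p)
        = (cO j)^2/2 + cO j * misD sO cO j / 2 + (misD sO cO j)^2/6 := by
      intro j
      have e : ∀ p, bI p * ((cO j)^2/2 + misD sO cO j * cO j * cI p + (misD sO cO j)^2 * (AI *ᵥ cI) p)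
          = (cO j)^2/2 * bI p + (misD sO cO j * cO j) * (bI p * cI p)
            + (misD sO cO j)^2 * (bI p * (AI *ᵥ cI) p) := fun p => by ring
      simp_rw [hAffrow j, e, Finset.sum_add_distrib, ← Finset.mul_sum, hbI1, hbI2, hbI4]; ring
    have key4 : ∀ i : Fin sO,
        (misAsf sI sO bI cO *ᵥ (misAff sI sO AI bI cO *ᵥ misCf sI sO cI cO)) i = (cO i)^3/6 := by
      intro i
      rw [hAsf]
      have e : ∀ j : Fin sO, (if (j:ℕ) < (i:ℕ) then misD sO cO j * ∑ q, bI q * (misAff sI sO AI bI cO *ᵥ misCf sI sO cI cO) (j, q) else 0)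
          = (if (j:ℕ) < (i:ℕ) then dE sO cO j * ((cE sO cO j)^2/2 + cE sO cO j * dE sO cO j / 2 + (dE sO cO j)^2/6) else 0) := by
        intro j; rw [hm3 j, misD_eq, hcEj j]
      rw [Finset.sum_congr rfl (fun j _ => e j),
        sum_fin_ite_lt sO i.1 (le_of_lt i.isLt) (fun m => dE sO cO m * ((cE sO cO m)^2/2 + cE sO cO m * dE sO cO m / 2 + (dE sO cO m)^2/6)),
        teleC, hcE0, hcEj i]
      ring
    simp only [dotProduct]
    simp_rw [key4]
    have e : ∀ i, bO i * ((cO i)^3/6) = (bO i * (cO i)^3)/6 := fun i => by ring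
    simp_rw [e]
    rw [← Finset.sum_div, hbO5]; norm_num
  · -- condition 5
    have h1sO : 1 < sO := by omega
    have hwE : ∀ (n : ℕ) (h : n < sO), wE sO AO bO cO n = ∑ k, AO ⟨n, h⟩ k * cO k := by
      intro n h; unfold wE; rw [dif_pos h]; rfl
    have hwEtop : ∀ (n : ℕ), ¬ n < sO → wE sO AO bO cO n = ∑ k, bO k * cO k := by
      intro n h; unfold wE; rw [dif_neg h]; rfl
    have hw0 : wE sO AO bO cO 0 = 0 := by
      rw [hwE 0 h0sO]
      refine Finset.sum_eq_zero fun k _ => ?_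
      rw [hAOexp ⟨0, h0sO⟩ k (Fin.le_def.mpr (Nat.zero_le _)), zero_mul]
    have hbEj : ∀ i : Fin sO, bE sO bO i.1 = bO i := by
      intro i; simp [bE, i.isLt]
    have hAfs : ∀ (j : Fin sO) (q : Fin sI),
        (misAfs sI sO cI AO bO *ᵥ cO) (j, q)
          = wE sO AO bO cO j.1 + (wE sO AO bO cO (j.1+1) - wE sO AO bO cO j.1) * cI q := by
      intro j q
      simp only [Matrix.mulVec, dotProduct, misAfs]
      by_cases hj0 : j.1 = 0
      · simp only [hj0, eq_self_iff_true, if_true, dif_pos h1sO]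
        rw [hw0, hwE 1 h1sO, zero_add, sub_zero, Finset.sum_mul]
        exact Finset.sum_congr rfl fun k _ => by ring
      · simp only [if_neg hj0]
        by_cases h : j.1 + 1 < sO
        · simp only [dif_pos h]
          rw [hwE j.1 j.isLt, hwE (j.1+1) h]
          simp only [Fin.eta]
          rw [← Finset.sum_sub_distrib, Finset.sum_mul, ← Finset.sum_add_distrib]
          exact Finset.sum_congr rfl fun k _ => by ring
        · simp only [dif_neg h]
          rw [hwE j.1 j.isLt, hwEtop (j.1+1) h]
          simp only [Fin.eta]
          rw [← Finset.sum_sub_distrib, Finset.sum_mul, ← Finset.sum_add_distrib]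
          exact Finset.sum_congr rfl fun k _ => by ring
    have hm5 : ∀ j : Fin sO, ∑ q, bI q * (misAfs sI sO cI AO bO *ᵥ cO) (j, q)
        = (wE sO AO bO cO j.1 + wE sO AO bO cO (j.1+1)) / 2 := by
      intro j
      have e : ∀ q, bI q * (misAfs sI sO cI AO bO *ᵥ cO) (j, q)
          = wE sO AO bO cO j.1 * bI q
            + (wE sO AO bO cO (j.1+1) - wE sO AO bO cO j.1) * (bI q * cI q) := by
        intro q; rw [hAfs j q]; ring
      simp_rw [e, Finset.sum_add_distrib, ← Finset.mul_sum, hbI1, hbI2]; ring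
    have step1 : bO ⬝ᵥ (misAsf sI sO bI cO *ᵥ (misAfs sI sO cI AO bO *ᵥ cO))
        = ∑ n ∈ Finset.range sO, bE sO bO n * ∑ m ∈ Finset.range n, gE sO AO bO cO m := by
      simp only [dotProduct]
      rw [← Fin.sum_univ_eq_sum_range
        (fun n => bE sO bO n * ∑ m ∈ Finset.range n, gE sO AO bO cO m) sO]
      refine Finset.sum_congr rfl fun i _ => ?_
      rw [hAsf]
      have e : ∀ j : Fin sO,
          (if (j:ℕ) < (i:ℕ) then misD sO cO j * ∑ q, bI q * (misAfs sI sO cI AO bO *ᵥ cO) (j, q) else 0)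
            = (if (j:ℕ) < (i:ℕ) then gE sO AO bO cO j.1 else 0) := by
        intro j; rw [hm5 j, misD_eq]; rfl
      rw [Finset.sum_congr rfl (fun j _ => e j),
        sum_fin_ite_lt sO i.1 (le_of_lt i.isLt) (gE sO AO bO cO), hbEj i]
    have step2 : ∑ n ∈ Finset.range sO, bE sO bO n * ∑ m ∈ Finset.range n, gE sO AO bO cO m
        = ∑ m ∈ Finset.range sO, BE sO bO (m+1) * gE sO AO bO cO m := by
      have e1 : ∀ n ∈ Finset.range sO, bE sO bO n * ∑ m ∈ Finset.range n, gE sO AO bO cO m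
          = ∑ m ∈ Finset.range sO, (if m < n then bE sO bO n * gE sO AO bO cO m else 0) := by
        intro n hn
        rw [Finset.mul_sum, ← sum_range_ite_lt sO n (le_of_lt (Finset.mem_range.mp hn))
          (fun m => bE sO bO n * gE sO AO bO cO m)]
      rw [Finset.sum_congr rfl e1, Finset.sum_comm]
      refine Finset.sum_congr rfl fun m _ => ?_
      have e2 : ∀ n, (if m < n then bE sO bO n * gE sO AO bO cO m else 0)
          = (if m + 1 ≤ n then bE sO bO n else 0) * gE sO AO bO cO m := by
        intro n
        by_cases h1 : m < n
        · rw [if_pos h1, if_pos (by omega)]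
        · rw [if_neg h1, if_neg (by omega), zero_mul]
      rw [Finset.sum_congr rfl (fun n _ => e2 n), ← Finset.sum_mul]
      rfl
    have hFE : ∀ m : ℕ, FE sO AO bO cO (m+1)
        = (dE sO cO m * BE sO bO (m+1)) * wE sO AO bO cO (m+1) := by
      intro m; unfold FE; rw [if_neg (Nat.succ_ne_zero m)]; simp
    have step3 : ∑ m ∈ Finset.range sO, FE sO AO bO cO (m+1)
        = ∑ m ∈ Finset.range sO, FE sO AO bO cO m := by
      have h1 := Finset.sum_range_succ' (FE sO AO bO cO) sO
      have h2 := Finset.sum_range_succ (FE sO AO bO cO) sO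
      have hF0 : FE sO AO bO cO 0 = 0 := by unfold FE; rw [if_pos rfl]
      have hFtop : FE sO AO bO cO sO = 0 := by
        unfold FE
        rw [if_neg (by omega), BE_top, mul_zero, zero_mul]
      rw [hF0, add_zero] at h1
      rw [hFtop, add_zero] at h2
      rw [← h1, h2]
    have term : ∀ m ∈ Finset.range sO,
        (dE sO cO m * BE sO bO (m+1)) * wE sO AO bO cO m + FE sO AO bO cO m
          = vE sO bO cO m * wE sO AO bO cO m := by
      intro m hm
      have hmlt := Finset.mem_range.mp hm
      by_cases h0 : m = 0
      · subst h0
        rw [hw0]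
        unfold FE
        rw [if_pos rfl]
        ring
      · have hFm : FE sO AO bO cO m = (dE sO cO (m-1) * BE sO bO m) * wE sO AO bO cO m := by
          unfold FE; rw [if_neg h0]
        have hvm : vE sO bO cO m = misV sO bO cO ⟨m, hmlt⟩ := by
          unfold vE; rw [dif_pos hmlt]
        have hdm : dE sO cO (m-1) = cE sO cO m - cE sO cO (m-1) := by
          unfold dE; rw [show m - 1 + 1 = m by omega]
        have hsum : (∑ j ∈ Finset.univ.filter (fun j => (⟨m, hmlt⟩ : Fin sO) < j), bO j)
            = BE sO bO (m+1) := by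
          rw [Finset.sum_filter]
          have e : ∀ j : Fin sO, (if (⟨m, hmlt⟩ : Fin sO) < j then bO j else 0)
              = (if m < (j:ℕ) then bE sO bO j.1 else 0) := by
            intro j
            by_cases h : m < (j:ℕ)
            · rw [if_pos h, if_pos (show (⟨m, hmlt⟩ : Fin sO) < j from h), hbEj j]
            · rw [if_neg h, if_neg (show ¬((⟨m, hmlt⟩ : Fin sO) < j) from h)]
          rw [Finset.sum_congr rfl (fun j _ => e j), sum_fin_ite_gt sO m (bE sO bO)]
          rfl
        have hv' : misV sO bO cO ⟨m, hmlt⟩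
            = dE sO cO m * BE sO bO (m+1) + dE sO cO (m-1) * BE sO bO m := by
          unfold misV
          simp only [if_neg h0]
          by_cases h2 : m + 1 < sO
          · rw [dif_pos h2, hsum, BE_succ sO bO m hmlt]
            have e1 : cO (⟨m, hmlt⟩ : Fin sO) = cE sO cO m := (hcE m hmlt).symm
            have e2 : cO (⟨m - 1, _⟩ : Fin sO) = cE sO cO (m-1) := (hcE (m-1) (by omega)).symm
            have e3 : cO (⟨m + 1, h2⟩ : Fin sO) = cE sO cO (m+1) := (hcE (m+1) h2).symm
            rw [e1, e2, e3, show bO (⟨m, hmlt⟩ : Fin sO) = bE sO bO m from (hbEj ⟨m, hmlt⟩).symm,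
              hdm]
            unfold dE
            ring
          · rw [dif_neg h2]
            have hBtop : BE sO bO (m+1) = 0 := by
              rw [show m + 1 = sO by omega]; exact BE_top sO bO
            rw [BE_succ sO bO m hmlt, hBtop]
            have e1 : cO (⟨m, hmlt⟩ : Fin sO) = cE sO cO m := (hcE m hmlt).symm
            have e2 : cO (⟨m - 1, _⟩ : Fin sO) = cE sO cO (m-1) := (hcE (m-1) (by omega)).symm
            rw [e1, e2, show bO (⟨m, hmlt⟩ : Fin sO) = bE sO bO m from (hbEj ⟨m, hmlt⟩).symm,
              hdm]
            ring
        rw [hFm, hvm, hv']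
        ring
    have hvsum : ∑ m ∈ Finset.range sO, vE sO bO cO m * wE sO AO bO cO m = 1/12 := by
      rw [← hv]
      simp only [dotProduct]
      rw [← Fin.sum_univ_eq_sum_range (fun m => vE sO bO cO m * wE sO AO bO cO m) sO]
      refine Finset.sum_congr rfl fun i _ => ?_
      have e1 : vE sO bO cO i.1 = misV sO bO cO i := by simp [vE, i.isLt]
      have e2 : wE sO AO bO cO i.1 = (AO *ᵥ cO) i := by simp [wE, i.isLt]
      rw [e1, e2]
    rw [step1, step2]
    have e : ∀ m, BE sO bO (m+1) * gE sO AO bO cO m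
        = ((dE sO cO m * BE sO bO (m+1)) * wE sO AO bO cO m + FE sO AO bO cO (m+1)) / 2 := by
      intro m; rw [hFE m]; unfold gE; ring
    simp_rw [e]
    rw [← Finset.sum_div, Finset.sum_add_distrib, step3, ← Finset.sum_add_distrib,
      Finset.sum_congr rfl term, hvsum]
    norm_num
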